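/- Let I be a countable index set. The map sending H to the sequence (log(l_H(C_i)/l_{H₀}(C_i)), l_H(C_i)θ_H(C_i) − l_{H₀}(C_i)θ_{H₀}(C_i))_{i∈I} is an isometric bijection from the Fenchel-Nielsen Teichmüller space (functions (l,θ) : I → ℝ_{>0} × ℝ at finite d_FN-distance from a basepoint (l₀,θ₀)) onto ℓ^∞; consequently the Fenchel-Nielsen metric d_FN is complete. -/

import Mathlib

open Real Filter

/-- The Fenchel-Nielsen distance between two pairs of (length, twist) functions. -/
noncomputable def dFN {I : Type*} (p q : (I → ℝ) × (I → ℝ)) : ℝ :=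
  ⨆ i, max |Real.log (p.1 i / q.1 i)| |p.1 i * p.2 i - q.1 i * q.2 i|

/-- The Fenchel-Nielsen Teichmüller space based at `(l₀, θ₀)`. -/
def TFN {I : Type*} (l₀ θ₀ : I → ℝ) : Set ((I → ℝ) × (I → ℝ)) :=
  {p | (∀ i, 0 < p.1 i) ∧
    BddAbove (Set.range fun i =>
      max |Real.log (p.1 i / l₀ i)| |p.1 i * p.2 i - l₀ i * θ₀ i|)}

/-- The coordinate map to `ℓ^∞(I, ℝ × ℝ)`. -/
noncomputable def FNmap {I : Type*} (l₀ θ₀ : I → ℝ) (p : (I → ℝ) × (I → ℝ)) :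
    I → ℝ × ℝ :=
  fun i => (Real.log (p.1 i / l₀ i), p.1 i * p.2 i - l₀ i * θ₀ i)

lemma FN_norm_eq {I : Type*} (l₀ θ₀ : I → ℝ) (p : (I → ℝ) × (I → ℝ)) (i : I) :
    ‖FNmap l₀ θ₀ p i‖ =
      max |Real.log (p.1 i / l₀ i)| |p.1 i * p.2 i - l₀ i * θ₀ i| := by
  simp [FNmap, Prod.norm_def, Real.norm_eq_abs]

lemma FN_mem {I : Type*} (l₀ θ₀ : I → ℝ) (p : (I → ℝ) × (I → ℝ))
    (hp : p ∈ TFN l₀ θ₀) : Memℓp (FNmap l₀ θ₀ p) ⊤ := by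
  refine memℓp_infty ?_
  have : (fun i => ‖FNmap l₀ θ₀ p i‖) =
      fun i => max |Real.log (p.1 i / l₀ i)| |p.1 i * p.2 i - l₀ i * θ₀ i| :=
    funext fun i => FN_norm_eq l₀ θ₀ p i
  rw [this]
  exact hp.2

lemma FN_surj {I : Type*} (l₀ θ₀ : I → ℝ) (hl₀ : ∀ i, 0 < l₀ i)
    (f : I → ℝ × ℝ) (hf : Memℓp f ⊤) :
    ∃ p ∈ TFN l₀ θ₀, FNmap l₀ θ₀ p = f := by
  set p : (I → ℝ) × (I → ℝ) :=
    (fun i => l₀ i * Real.exp ((f i).1),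
     fun i => ((f i).2 + l₀ i * θ₀ i) / (l₀ i * Real.exp ((f i).1))) with hpdef
  have hpos : ∀ i, 0 < p.1 i := fun i => mul_pos (hl₀ i) (Real.exp_pos _)
  have hmap : FNmap l₀ θ₀ p = f := by
    funext i
    have h1 : p.1 i / l₀ i = Real.exp ((f i).1) := by
      show l₀ i * Real.exp ((f i).1) / l₀ i = _
      rw [mul_comm, mul_div_assoc, div_self (hl₀ i).ne', mul_one]
    have h2 : p.1 i * p.2 i = (f i).2 + l₀ i * θ₀ i :=
      mul_div_cancel₀ _ (mul_pos (hl₀ i) (Real.exp_pos _)).ne'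
    simp only [FNmap, h1, Real.log_exp, h2]
    simp
  refine ⟨p, ⟨hpos, ?_⟩, hmap⟩
  have := memℓp_infty_iff.mp hf
  have heq : (fun i => max |Real.log (p.1 i / l₀ i)| |p.1 i * p.2 i - l₀ i * θ₀ i|)
      = fun i => ‖f i‖ := by
    funext i
    rw [← FN_norm_eq l₀ θ₀ p i, hmap]
  rw [heq]
  exact this

lemma FN_point_eq {I : Type*} (l₀ θ₀ : I → ℝ) (hl₀ : ∀ i, 0 < l₀ i)
    {p q : (I → ℝ) × (I → ℝ)} (hp : ∀ i, 0 < p.1 i) (hq : ∀ i, 0 < q.1 i) (i : I) :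
    max |Real.log (p.1 i / q.1 i)| |p.1 i * p.2 i - q.1 i * q.2 i|
      = ‖FNmap l₀ θ₀ p i - FNmap l₀ θ₀ q i‖ := by
  have h1 : Real.log (p.1 i / l₀ i) - Real.log (q.1 i / l₀ i)
      = Real.log (p.1 i / q.1 i) := by
    rw [Real.log_div (hp i).ne' (hl₀ i).ne', Real.log_div (hq i).ne' (hl₀ i).ne',
      Real.log_div (hp i).ne' (hq i).ne']
    ring
  have h2 : (p.1 i * p.2 i - l₀ i * θ₀ i) - (q.1 i * q.2 i - l₀ i * θ₀ i)
      = p.1 i * p.2 i - q.1 i * q.2 i := by ring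
  simp [FNmap, Prod.norm_def, Real.norm_eq_abs, h1, h2]

lemma FN_dist_eq {I : Type*} (l₀ θ₀ : I → ℝ) (hl₀ : ∀ i, 0 < l₀ i)
    {p q : (I → ℝ) × (I → ℝ)} (hp : ∀ i, 0 < p.1 i) (hq : ∀ i, 0 < q.1 i) :
    dFN p q = ⨆ i, ‖FNmap l₀ θ₀ p i - FNmap l₀ θ₀ q i‖ :=
  iSup_congr fun i => FN_point_eq l₀ θ₀ hl₀ hp hq i

/-- The Fenchel-Nielsen coordinate map is an isometric bijection onto `ℓ^∞`, and
consequently the Fenchel-Nielsen metric is complete. -/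
theorem FN_isometric_bijection_and_complete {I : Type*} [Countable I]
    (l₀ θ₀ : I → ℝ) (hl₀ : ∀ i, 0 < l₀ i) :
    (∀ p ∈ TFN l₀ θ₀, Memℓp (FNmap l₀ θ₀ p) ⊤) ∧
    (∀ f : I → ℝ × ℝ, Memℓp f ⊤ → ∃ p ∈ TFN l₀ θ₀, FNmap l₀ θ₀ p = f) ∧
    (∀ p ∈ TFN l₀ θ₀, ∀ q ∈ TFN l₀ θ₀, FNmap l₀ θ₀ p = FNmap l₀ θ₀ q → p = q) ∧
    (∀ p ∈ TFN l₀ θ₀, ∀ q ∈ TFN l₀ θ₀,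
      dFN p q = ⨆ i, ‖FNmap l₀ θ₀ p i - FNmap l₀ θ₀ q i‖) ∧
    (∀ x : ℕ → (I → ℝ) × (I → ℝ), (∀ n, x n ∈ TFN l₀ θ₀) →
      (∀ ε > 0, ∃ N, ∀ n > N, ∀ m > N, dFN (x n) (x m) < ε) →
      ∃ p ∈ TFN l₀ θ₀, Tendsto (fun n => dFN (x n) p) atTop (nhds 0)) := by
  refine ⟨FN_mem l₀ θ₀, FN_surj l₀ θ₀ hl₀, ?_, ?_, ?_⟩
  · -- injectivity
    intro p hp q hq h
    have h1 : ∀ i, p.1 i = q.1 i := by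
      intro i
      have := congrArg (fun g => (g i).1) h
      simp only [FNmap] at this
      have := Real.log_injOn_pos.eq_iff
        (Set.mem_Ioi.mpr (div_pos (hp.1 i) (hl₀ i)))
        (Set.mem_Ioi.mpr (div_pos (hq.1 i) (hl₀ i))) |>.mp this
      have h3 := congrArg (· * l₀ i) this
      simpa [div_mul_cancel₀, (hl₀ i).ne'] using h3
    have h2 : ∀ i, p.2 i = q.2 i := by
      intro i
      have h' := congrArg (fun g => (g i).2) h
      simp only [FNmap] at h'
      have h'' : p.1 i * p.2 i = q.1 i * q.2 i := by linarith
      rw [h1 i] at h''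
      exact mul_left_cancel₀ (hq.1 i).ne' h''
    exact Prod.ext (funext h1) (funext h2)
  · intro p hp q hq
    exact FN_dist_eq l₀ θ₀ hl₀ hp.1 hq.1
  · -- completeness
    intro x hx hcau
    haveI : Fact ((1 : ENNReal) ≤ ⊤) := ⟨le_top⟩
    let y : ℕ → lp (fun _ : I => ℝ × ℝ) ⊤ :=
      fun n => ⟨FNmap l₀ θ₀ (x n), FN_mem l₀ θ₀ _ (hx n)⟩
    have hdist : ∀ n m, dFN (x n) (x m) = dist (y n) (y m) := by
      intro n m
      rw [dist_eq_norm, lp.norm_eq_ciSup,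
        FN_dist_eq l₀ θ₀ hl₀ (hx n).1 (hx m).1]
      exact iSup_congr fun i => by simp [y, lp.coeFn_sub]; rfl
    have hy : CauchySeq y := by
      rw [Metric.cauchySeq_iff]
      intro ε hε
      obtain ⟨N, hN⟩ := hcau ε hε
      exact ⟨N + 1, fun m hm n hn => by
        rw [← hdist]; exact hN m (by omega) n (by omega)⟩
    obtain ⟨g, hg⟩ := cauchySeq_tendsto_of_complete hy
    obtain ⟨p, hpT, hpf⟩ := FN_surj l₀ θ₀ hl₀ (⇑g) (lp.memℓp g)
    refine ⟨p, hpT, ?_⟩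
    have heq : ∀ n, dFN (x n) p = dist (y n) g := by
      intro n
      rw [dist_eq_norm, lp.norm_eq_ciSup, FN_dist_eq l₀ θ₀ hl₀ (hx n).1 hpT.1]
      exact iSup_congr fun i => by simp [y, lp.coeFn_sub, hpf]; rfl
    exact (tendsto_iff_dist_tendsto_zero.mp hg).congr fun n => (heq n).symm
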